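/- For all 0 < s < t one has μ̇(s) ≤ [μ̇(t)]^{s/t}. -/

import Mathlib

open Filter Topology MeasureTheory
open scoped ENNReal NNReal

/-- For all `0 < s < t`: `μ̇(s) ≤ (μ̇(t))^(s/t)`. -/
theorem mu_derivative_power_bound
    (π : ℕ → ℝ) (hπpos : ∀ i, 0 < π i) (hπmono : ∀ i, π (i + 1) ≤ π i)
    (hπsum : HasSum π 1)
    (μ' : ℝ → ℝ) (hμ' : ∀ t, μ' t = ∑' i, π i * Real.exp (-t * π i))
    (s t : ℝ) (hs : 0 < s) (hst : s < t) :
    μ' s ≤ (μ' t) ^ (s / t) := by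
  have ht : 0 < t := hs.trans hst
  set θ := s / t with hθdef
  have hθ0 : 0 < θ := div_pos hs ht
  have hθ1 : θ < 1 := (div_lt_one ht).2 hst
  have hsum : Summable π := hπsum.summable
  -- nonnegativity and summability of the terms
  have hterm : ∀ (u : ℝ) (i : ℕ), 0 ≤ π i * Real.exp (-u * π i) := fun u i =>
    mul_nonneg (hπpos i).le (Real.exp_pos _).le
  have hsummable : ∀ (u : ℝ), 0 < u → Summable (fun i => π i * Real.exp (-u * π i)) := by
    intro u hu
    refine Summable.of_nonneg_of_le (hterm u) (fun i => ?_) hsum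
    have : Real.exp (-u * π i) ≤ 1 := by
      rw [Real.exp_le_one_iff]
      exact mul_nonpos_of_nonpos_of_nonneg (neg_nonpos.2 hu.le) (hπpos i).le
    calc π i * Real.exp (-u * π i) ≤ π i * 1 :=
          mul_le_mul_of_nonneg_left this (hπpos i).le
      _ = π i := mul_one _
  have hμt0 : 0 ≤ μ' t := by
    rw [hμ']; exact tsum_nonneg (hterm t)
  have hμs0 : 0 ≤ μ' s := by
    rw [hμ']; exact tsum_nonneg (hterm s)
  -- Hölder's inequality in ℝ≥0∞
  set F : ℕ → ℝ≥0∞ := fun i => ENNReal.ofReal (π i * Real.exp (-t * π i)) with hF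
  set G : ℕ → ℝ≥0∞ := fun i => ENNReal.ofReal (π i) with hG
  have hpq : Real.HolderConjugate (1/θ) (1/(1-θ)) := by
    rw [Real.holderConjugate_iff]
    constructor
    · rw [lt_div_iff₀ hθ0, one_mul]; exact hθ1
    · rw [one_div, one_div, inv_inv, inv_inv]; ring
  have hmeas : ∀ (h : ℕ → ℝ≥0∞), AEMeasurable h (Measure.count) := fun h =>
    (measurable_of_countable h).aemeasurable
  have holder := ENNReal.lintegral_mul_le_Lp_mul_Lq (Measure.count (α := ℕ)) hpq
    (hmeas (fun i => F i ^ θ)) (hmeas (fun i => G i ^ (1-θ)))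
  rw [lintegral_count, lintegral_count, lintegral_count] at holder
  -- simplify each of the three sums
  have h1θ : 0 < 1 - θ := by linarith
  have hprod : ∀ i, F i ^ θ * G i ^ (1-θ)
      = ENNReal.ofReal (π i * Real.exp (-s * π i)) := by
    intro i
    have hπi := (hπpos i).le
    have hei := (Real.exp_pos (-t * π i)).le
    simp only [hF, hG]
    rw [ENNReal.ofReal_rpow_of_nonneg (mul_nonneg hπi hei) hθ0.le,
        ENNReal.ofReal_rpow_of_nonneg hπi h1θ.le,
        ← ENNReal.ofReal_mul (Real.rpow_nonneg (mul_nonneg hπi hei) θ)]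
    congr 1
    rw [Real.mul_rpow hπi hei, ← Real.exp_mul]
    have : -t * π i * θ = -s * π i := by
      field_simp [hθdef]
      rw [hθdef, div_eq_mul_inv]
      field_simp
    rw [this, mul_comm (π i ^ θ * Real.exp (-s * π i)) (π i ^ (1-θ)), ← mul_assoc,
        ← Real.rpow_add (hπpos i)]
    norm_num
  have hfp : ∀ i, (F i ^ θ) ^ (1/θ) = F i := by
    intro i
    rw [← ENNReal.rpow_mul, mul_one_div_cancel hθ0.ne', ENNReal.rpow_one]
  have hgq : ∀ i, (G i ^ (1-θ)) ^ (1/(1-θ)) = G i := by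
    intro i
    rw [← ENNReal.rpow_mul, mul_one_div_cancel h1θ.ne', ENNReal.rpow_one]
  simp only [Pi.mul_apply] at holder
  rw [tsum_congr hprod, tsum_congr hfp, tsum_congr hgq] at holder
  have hsumS : ∑' i, ENNReal.ofReal (π i * Real.exp (-s * π i)) = ENNReal.ofReal (μ' s) := by
    rw [hμ', ENNReal.ofReal_tsum_of_nonneg (hterm s) (hsummable s hs)]
  have hsumT : ∑' i, F i = ENNReal.ofReal (μ' t) := by
    rw [hμ', ENNReal.ofReal_tsum_of_nonneg (hterm t) (hsummable t ht)]
  have hsumG : ∑' i, G i = 1 := by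
    rw [ENNReal.ofReal_tsum_of_nonneg (fun i => (hπpos i).le) hsum |>.symm, hπsum.tsum_eq]
    simp
  rw [hsumS, hsumT, hsumG, ENNReal.one_rpow, mul_one, one_div_one_div] at holder
  -- back to ℝ
  have : ENNReal.ofReal (μ' s) ≤ ENNReal.ofReal ((μ' t) ^ θ) := by
    rwa [← ENNReal.ofReal_rpow_of_nonneg hμt0 hθ0.le]
  exact (ENNReal.ofReal_le_ofReal_iff (Real.rpow_nonneg hμt0 θ)).1 this
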